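/- For every finite simple graph G and all integers d ≥ 0 and k ≥ 1, c_{⌈d/k⌉}(G) ≤ c_d(G^{(k)}). -/

import Mathlib

open SimpleGraph Set

namespace CopsRobbers

variable {V : Type}

/-- One step of a player in the game: stay put or move to an adjacent vertex. -/
def Step (G : SimpleGraph V) (a b : V) : Prop := a = b ∨ G.Adj a b

/-- `u` is within graph distance `d` of `v` in `G`. -/
def WithinDist (G : SimpleGraph V) (d : ℕ) (u v : V) : Prop :=
  ∃ w : G.Walk u v, w.length ≤ d

/-- `p` cops have a strategy on `G` that guarantees capturing the robber at distance `d`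
within finitely many rounds.  A cop strategy is a function `F` from the history of robber
positions to the positions of the `p` cops (`F []` gives the initial placement, chosen
before the robber places himself); the robber is modelled by an arbitrary trajectory
`r : ℕ → V` of vertices, each step staying put or moving along an edge.  Capture happens
if after some robber move, or after the cops' reply to it, some cop is within distance
`d` of the robber. -/
def CopsWin (G : SimpleGraph V) (d p : ℕ) : Prop :=
  ∃ F : List V → Fin p → V,
    (∀ (hist : List V) (x : V) (i : Fin p), Step G (F hist i) (F (hist ++ [x]) i)) ∧
    ∀ r : ℕ → V, (∀ n, Step G (r n) (r (n + 1))) →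
      ∃ (n : ℕ) (i : Fin p),
        WithinDist G d (F (List.ofFn fun m : Fin n => r m.val) i) (r n) ∨
        WithinDist G d (F (List.ofFn fun m : Fin (n + 1) => r m.val) i) (r n)

/-- The distance-`d` cop number of `G`: the least number of cops that can guarantee
capture at distance `d`. -/
noncomputable def copNumber (G : SimpleGraph V) (d : ℕ) : ℕ :=
  sInf { p | CopsWin G d p }

end CopsRobbers
namespace CopsRobbers

/-- A drawing of a finite simple graph in the plane: vertices go to distinct points, every
edge `uv` is drawn as a simple arc `arc u v` (parametrised on `[0,1]`, with
`arc v u` the reverse parametrisation) joining the endpoints, avoiding all vertex points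
in its interior, any two arcs meet in finitely many points, and no non-vertex point lies
on three or more arcs. -/
structure PlaneDrawing {V : Type} (G : SimpleGraph V) where
  vpos : V → ℝ × ℝ
  arc : V → V → ℝ → ℝ × ℝ
  vpos_inj : Function.Injective vpos
  arc_symm : ∀ u v, G.Adj u v → ∀ t : ℝ, arc u v t = arc v u (1 - t)
  arc_cont : ∀ u v, G.Adj u v → ContinuousOn (arc u v) (Set.Icc (0:ℝ) 1)
  arc_start : ∀ u v, G.Adj u v → arc u v 0 = vpos u
  arc_end : ∀ u v, G.Adj u v → arc u v 1 = vpos v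
  arc_injOn : ∀ u v, G.Adj u v → Set.InjOn (arc u v) (Set.Icc (0:ℝ) 1)
  arc_avoid : ∀ u v, G.Adj u v → ∀ t ∈ Set.Ioo (0:ℝ) 1, ∀ w, arc u v t ≠ vpos w
  finite_inter : ∀ u v w x, G.Adj u v → G.Adj w x → s(u, v) ≠ s(w, x) →
    (arc u v '' Set.Icc (0:ℝ) 1 ∩ arc w x '' Set.Icc (0:ℝ) 1).Finite
  no_triple : ∀ pt : ℝ × ℝ, pt ∉ Set.range vpos →
    ∀ u₁ v₁ u₂ v₂ u₃ v₃, G.Adj u₁ v₁ → G.Adj u₂ v₂ → G.Adj u₃ v₃ →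
      s(u₁, v₁) ≠ s(u₂, v₂) → s(u₁, v₁) ≠ s(u₃, v₃) → s(u₂, v₂) ≠ s(u₃, v₃) →
      ¬(pt ∈ arc u₁ v₁ '' Set.Icc (0:ℝ) 1 ∧ pt ∈ arc u₂ v₂ '' Set.Icc (0:ℝ) 1 ∧
        pt ∈ arc u₃ v₃ '' Set.Icc (0:ℝ) 1)

namespace PlaneDrawing

variable {V : Type} {G : SimpleGraph V}

/-- The edges `uv` and `wx` cross in the drawing: they are distinct edges sharing a point
interior to both arcs. -/
def Crosses (D : PlaneDrawing G) (u v w x : V) : Prop :=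
  G.Adj u v ∧ G.Adj w x ∧ s(u, v) ≠ s(w, x) ∧
    ∃ pt : ℝ × ℝ, pt ∈ D.arc u v '' Set.Ioo (0:ℝ) 1 ∧ pt ∈ D.arc w x '' Set.Ioo (0:ℝ) 1

/-- `e` is an uncrossed edge of the drawing. -/
def UncrossedE (D : PlaneDrawing G) (e : Sym2 V) : Prop :=
  ∀ a b w x, s(a, b) = e → ¬D.Crosses a b w x

/-- The set of crossing points lying on the edge `uv`. -/
def crossingPointsOn (D : PlaneDrawing G) (u v : V) : Set (ℝ × ℝ) :=
  { pt | pt ∈ D.arc u v '' Set.Ioo (0:ℝ) 1 ∧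
      ∃ w x, D.Crosses u v w x ∧ pt ∈ D.arc w x '' Set.Ioo (0:ℝ) 1 }

/-- `pt` is a crossing point of the drawing. -/
def IsCrossingPoint (D : PlaneDrawing G) (pt : ℝ × ℝ) : Prop :=
  ∃ u v w x, D.Crosses u v w x ∧ pt ∈ D.arc u v '' Set.Ioo (0:ℝ) 1 ∧
    pt ∈ D.arc w x '' Set.Ioo (0:ℝ) 1

/-- The drawing is `k`-plane: every edge is crossed at most `k` times. -/
def KPlane (D : PlaneDrawing G) (k : ℕ) : Prop :=
  ∀ u v, G.Adj u v → (D.crossingPointsOn u v).Finite ∧ (D.crossingPointsOn u v).ncard ≤ k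

/-- The drawing is 1-plane: every edge is crossed at most once, and (as usual) no two
edges sharing an endpoint cross, so every crossing has four distinct endpoints. -/
def OnePlane (D : PlaneDrawing G) : Prop :=
  D.KPlane 1 ∧ ∀ u v w x, D.Crosses u v w x → u ≠ w ∧ u ≠ x ∧ v ≠ w ∧ v ≠ x

/-- The parameter `X(G)` of the drawing: the least `n` such that for every crossing,
every pair of consecutive endpoints is joined by a path of length at most `n`. -/
noncomputable def Xparam (D : PlaneDrawing G) : ℕ :=
  sInf { n | ∀ u v w x, D.Crosses u v w x → ∀ a b : V, (a = u ∨ a = v) → (b = w ∨ b = x) →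
    ∃ p : G.Walk a b, p.length ≤ n }

/-- The parameter `x(G)` of the drawing: the least `n` such that for every crossing,
some pair of consecutive endpoints is joined by a path of length at most `n`. -/
noncomputable def xparam (D : PlaneDrawing G) : ℕ :=
  sInf { n | ∀ u v w x, D.Crosses u v w x → ∃ a b : V, (a = u ∨ a = v) ∧ (b = w ∨ b = x) ∧
    ∃ p : G.Walk a b, p.length ≤ n }

/-- The subset of the plane covered by the drawing. -/
def image (D : PlaneDrawing G) : Set (ℝ × ℝ) :=
  Set.range D.vpos ∪ ⋃ (u : V) (v : V) (_ : G.Adj u v), D.arc u v '' Set.Icc (0:ℝ) 1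

/-- Faces of the drawing: connected components of the complement. -/
def IsFace (D : PlaneDrawing G) (F : Set (ℝ × ℝ)) : Prop :=
  ∃ z ∉ D.image, F = connectedComponentIn D.imageᶜ z

/-- The subset of the plane covered by the arc of the (unordered) edge `e`. -/
def edgeArcSet (D : PlaneDrawing G) (e : Sym2 V) : Set (ℝ × ℝ) :=
  ⋃ (a : V) (b : V) (_ : G.Adj a b) (_ : s(a, b) = e), D.arc a b '' Set.Icc (0:ℝ) 1

/-- The skeleton of the drawing: the subgraph consisting of all uncrossed edges. -/
def skeleton (D : PlaneDrawing G) : SimpleGraph V where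
  Adj u v := G.Adj u v ∧ D.UncrossedE s(u, v)
  symm := by
    refine ⟨?_⟩
    intro u v h
    refine ⟨h.1.symm, ?_⟩
    rw [Sym2.eq_swap]
    exact h.2
  loopless := ⟨fun v h => G.loopless.irrefl v h.1⟩

/-- The subset of the plane covered by the drawing of the skeleton. -/
def skelImage (D : PlaneDrawing G) : Set (ℝ × ℝ) :=
  ⋃ (u : V) (v : V) (_ : G.Adj u v) (_ : D.UncrossedE s(u, v)), D.arc u v '' Set.Icc (0:ℝ) 1

/-- Faces of the skeleton: connected components of the complement of its drawing. -/
def IsSkelFace (D : PlaneDrawing G) (F : Set (ℝ × ℝ)) : Prop :=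
  ∃ z ∉ D.skelImage, F = connectedComponentIn D.skelImageᶜ z

/-- `κ` is a kite path for the crossing of `uv` and `wx` joining the consecutive
endpoints `u` and `w`: a shortest `(u,w)`-path all of whose edges are uncrossed and whose
internal vertices have degree `2`, such that the part of the arc of `uv` from `u` to the
crossing point, the arcs of `κ`, and the part of the arc of `wx` from the crossing point
to `w` together bound a face of the drawing. -/
def IsKitePath (D : PlaneDrawing G) (u v w x : V) (κ : G.Walk u w) : Prop :=
  D.Crosses u v w x ∧ κ.IsPath ∧ (∀ q : G.Walk u w, κ.length ≤ q.length) ∧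
  (∀ e ∈ κ.edges, D.UncrossedE e) ∧
  (∀ y ∈ κ.support, y ≠ u → y ≠ w → (G.neighborSet y).ncard = 2) ∧
  ∃ t s' : ℝ, t ∈ Set.Ioo (0:ℝ) 1 ∧ s' ∈ Set.Ioo (0:ℝ) 1 ∧ D.arc u v t = D.arc w x s' ∧
    ∃ F, D.IsFace F ∧
      frontier F = (D.arc u v '' Set.Icc 0 t) ∪ (⋃ e ∈ κ.edges, D.edgeArcSet e) ∪
        (D.arc w x '' Set.Icc 0 s')

/-- The drawing is kite-augmented: for every crossing and every pair of consecutive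
endpoints there is a kite path joining them. -/
def KiteAugmented (D : PlaneDrawing G) : Prop :=
  ∀ u v w x, D.Crosses u v w x → ∃ κ : G.Walk u w, D.IsKitePath u v w x κ

/-- The face-distance between any two distinct crossing points of the drawing is at
least `f`: every chain of faces `Fc 0, …, Fc (j-1)` linked by vertex or crossing points
`pts 0 = c₁, pts 1, …, pts j = c₂` on the boundaries of consecutive faces (i.e. every
path in the radial graph between the two crossing points) uses at least `f` faces. -/
def FaceDistGe (D : PlaneDrawing G) (f : ℕ) : Prop :=
  ∀ c₁ c₂ : ℝ × ℝ, D.IsCrossingPoint c₁ → D.IsCrossingPoint c₂ → c₁ ≠ c₂ →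
    ∀ (j : ℕ) (Fc : Fin j → Set (ℝ × ℝ)) (pts : Fin (j + 1) → ℝ × ℝ),
      (∀ i, D.IsFace (Fc i)) →
      (∀ i, pts i ∈ Set.range D.vpos ∨ D.IsCrossingPoint (pts i)) →
      pts 0 = c₁ → pts (Fin.last j) = c₂ →
      (∀ i : Fin j, pts i.castSucc ∈ frontier (Fc i) ∧ pts i.succ ∈ frontier (Fc i)) →
      f ≤ j

end PlaneDrawing

end CopsRobbers
namespace CopsRobbers

/-- `H` is (a copy of) the `k`-subdivision `G^(k)` of `G`: `φ` embeds the vertices of `G`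
into those of `H`, and for every ordered adjacent pair `u v` of `G`, the vertices
`p u v 0, p u v 1, …, p u v k` form the path of length `k` of `H` replacing the
edge `uv` (traversed in the opposite direction for `p v u`); the interior vertices
of these paths are fresh and pairwise disjoint for distinct edges, the edges of `H` are
exactly the edges of these paths, and every vertex of `H` arises from `G` or from a
path. -/
structure IsKSubdivision {V W : Type} (G : SimpleGraph V) (k : ℕ) (H : SimpleGraph W)
    (φ : V → W) (p : V → V → ℕ → W) : Prop where
  phi_inj : Function.Injective φ
  start : ∀ u v, G.Adj u v → p u v 0 = φ u
  finish : ∀ u v, G.Adj u v → p u v k = φ v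
  rev : ∀ u v, G.Adj u v → ∀ i ≤ k, p u v i = p v u (k - i)
  inj : ∀ u v, G.Adj u v → ∀ i ≤ k, ∀ j ≤ k, p u v i = p u v j → i = j
  internal : ∀ u v, G.Adj u v → ∀ i, 0 < i → i < k → p u v i ∉ Set.range φ
  disjoint : ∀ u v u' v', G.Adj u v → G.Adj u' v' → s(u, v) ≠ s(u', v') →
    ∀ i j, 0 < i → i < k → 0 < j → j < k → p u v i ≠ p u' v' j
  adj_iff : ∀ a b : W, H.Adj a b ↔ ∃ u v, ∃ _ : G.Adj u v, ∃ i < k,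
    (a = p u v i ∧ b = p u v (i + 1)) ∨ (b = p u v i ∧ a = p u v (i + 1))
  cover : ∀ w : W, (∃ v, w = φ v) ∨ ∃ u v, ∃ _ : G.Adj u v, ∃ i ≤ k, w = p u v i

/-- `H` together with its drawing `DH` is the subdivision `G^(k)` of the drawn graph
`(G, D)`, drawn by placing the subdivision vertices of each edge on its arc, so that the
crossings of `G^(k)` are exactly the crossings of `G`, occurring between subdivision
edges. -/
structure IsDrawnSubdivision {V W : Type} (G : SimpleGraph V) (D : PlaneDrawing G)
    (k : ℕ) (H : SimpleGraph W) (DH : PlaneDrawing H) (φ : V → W)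
    (p : V → V → ℕ → W) : Prop where
  sub : IsKSubdivision G k H φ p
  vpos_eq : ∀ v, DH.vpos (φ v) = D.vpos v
  on_arc : ∀ u v, G.Adj u v → ∀ i ≤ k, DH.vpos (p u v i) ∈ D.arc u v '' Set.Icc (0:ℝ) 1
  arcs_cover : ∀ u v, G.Adj u v →
    (⋃ i ∈ Finset.range k, DH.edgeArcSet s(p u v i, p u v (i + 1))) =
      D.arc u v '' Set.Icc (0:ℝ) 1
  cross_of : ∀ a b c e, DH.Crosses a b c e →
    ∃ u v w x, D.Crosses u v w x ∧ ∃ i < k, ∃ j < k,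
      s(a, b) = s(p u v i, p u v (i + 1)) ∧ s(c, e) = s(p w x j, p w x (j + 1))
  of_cross : ∀ u v w x, D.Crosses u v w x → ∃ i < k, ∃ j < k,
      DH.Crosses (p u v i) (p u v (i + 1)) (p w x j) (p w x (j + 1))

/-- `(H, DH)` is a 1-planarisation of the drawn graph `(G, D)`: a drawn subdivision
`G^(k)` of `G` whose drawing is 1-plane. -/
structure IsOnePlanarisation {V W : Type} (G : SimpleGraph V) (D : PlaneDrawing G)
    (k : ℕ) (H : SimpleGraph W) (DH : PlaneDrawing H) (φ : V → W)
    (p : V → V → ℕ → W) : Prop where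
  drawn : IsDrawnSubdivision G D k H DH φ p
  oneplane : DH.OnePlane

/-- `(K, DK)` is the kite-augmentation of the 1-plane drawn graph `(H, DH)` via the
embedding `ψ`: the drawing of `H` is kept unchanged, and for every crossing and every
pair of consecutive endpoints a new path with fresh internal vertices, of length equal to
the distance of the two endpoints in `H`, is added and drawn so that the resulting
drawing is a kite-augmented 1-plane drawing with the same crossings. -/
structure IsKiteAugmentationOf {W U : Type} {H : SimpleGraph W} (DH : PlaneDrawing H)
    {K : SimpleGraph U} (DK : PlaneDrawing K) (ψ : W → U) : Prop where
  inj : Function.Injective ψ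
  adj_iff : ∀ a b, K.Adj (ψ a) (ψ b) ↔ H.Adj a b
  vpos_eq : ∀ a, DK.vpos (ψ a) = DH.vpos a
  arc_eq : ∀ a b, H.Adj a b → ∀ t ∈ Set.Icc (0:ℝ) 1, DK.arc (ψ a) (ψ b) t = DH.arc a b t
  oneplane : DK.OnePlane
  kite : DK.KiteAugmented
  new_path : ∀ u v w x, DH.Crosses u v w x →
    ∃ κ : K.Walk (ψ u) (ψ w), κ.IsPath ∧ κ.length = H.dist u w ∧
      ∀ y ∈ κ.support, y ≠ ψ u → y ≠ ψ w → y ∉ Set.range ψ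
  new_deg : ∀ z : U, z ∉ Set.range ψ → (K.neighborSet z).ncard = 2
  cross_of : ∀ a b c e, DK.Crosses a b c e →
    ∃ u v w x, DH.Crosses u v w x ∧ s(a, b) = s(ψ u, ψ v) ∧ s(c, e) = s(ψ w, ψ x)

end CopsRobbers

namespace CopsRobbers

section SubdivisionProof

open SimpleGraph

attribute [local instance] Classical.propDecidable

/-- Context bundling a `k`-subdivision situation. -/
structure SubCtx (V W : Type) where
  G : SimpleGraph V
  H : SimpleGraph W
  k : ℕ
  φ : V → W
  p : V → V → ℕ → W
  hk : 1 ≤ k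
  hsub : IsKSubdivision G k H φ p

namespace SubCtx

variable {V W : Type} (C : SubCtx V W)

/-- `w` lies on an edge incident to `s`, at offset `j` from `s`. -/
def Off (s : V) (j : ℕ) (w : W) : Prop :=
  (j = 0 ∧ w = C.φ s) ∨ (0 < j ∧ j < C.k ∧ ∃ c, C.G.Adj s c ∧ w = C.p s c j)

theorem off_lt {s j w} (h : C.Off s j w) : j < C.k ∨ j = 0 := by
  rcases h with ⟨h, _⟩ | ⟨_, h, _⟩
  · exact Or.inr h
  · exact Or.inl h

theorem offNil {s j b} (h : C.Off s j (C.φ b)) : s = b ∧ j = 0 := by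
  rcases h with ⟨hj, he⟩ | ⟨h0, hlt, c, hadj, he⟩
  · exact ⟨(C.hsub.phi_inj he).symm, hj⟩
  · exact absurd ⟨b, he⟩ (C.hsub.internal s c hadj j h0 hlt)

theorem interiorEq {u v u' v' i j} (huv : C.G.Adj u v) (hu'v' : C.G.Adj u' v')
    (hi : 0 < i) (hik : i < C.k) (hj : 0 < j) (hjk : j < C.k)
    (he : C.p u v i = C.p u' v' j) :
    (u = u' ∧ v = v' ∧ i = j) ∨ (u = v' ∧ v = u' ∧ i = C.k - j) := by
  by_cases hs : s(u, v) = s(u', v')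
  · rw [Sym2.eq_iff] at hs
    rcases hs with ⟨rfl, rfl⟩ | ⟨rfl, rfl⟩
    · exact Or.inl ⟨rfl, rfl, C.hsub.inj u v huv i hik.le j hjk.le he⟩
    · refine Or.inr ⟨rfl, rfl, ?_⟩
      have hrev : C.p v u j = C.p u v (C.k - j) := C.hsub.rev v u huv.symm j hjk.le
      exact C.hsub.inj u v huv i hik.le (C.k - j) (by omega) (he.trans hrev)
  · exact absurd he (C.hsub.disjoint u v u' v' huv hu'v' hs i j hi hik hj hjk)

theorem normAdj {w w' : W} (h : C.H.Adj w w') :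
    ∃ u v, C.G.Adj u v ∧ ∃ i, i < C.k ∧ w = C.p u v i ∧ w' = C.p u v (i + 1) := by
  obtain ⟨u, v, huv, i, hik, hc⟩ := (C.hsub.adj_iff w w').1 h
  rcases hc with ⟨h1, h2⟩ | ⟨h1, h2⟩
  · exact ⟨u, v, huv, i, hik, h1, h2⟩
  · refine ⟨v, u, huv.symm, C.k - i - 1, by omega, ?_, ?_⟩
    · rw [C.hsub.rev u v huv (i+1) (by omega)] at h2
      rw [h2]; congr 1 <;> omega
    · rw [C.hsub.rev u v huv i (by omega)] at h1
      rw [h1]; congr 1 <;> omega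

theorem pAdj {u v i} (huv : C.G.Adj u v) (hik : i < C.k) :
    C.H.Adj (C.p u v i) (C.p u v (i + 1)) :=
  (C.hsub.adj_iff _ _).2 ⟨u, v, huv, i, hik, Or.inl ⟨rfl, rfl⟩⟩

/-- Core step analysis: one `H`-step from a located vertex. -/
theorem core {s j w w'} (ho : C.Off s j w) (ha : C.H.Adj w w') :
    (∃ j', C.Off s j' w' ∧ j' ≤ j + 1 ∧ j ≤ j' + 1) ∨
      (j = C.k - 1 ∧ ∃ c, C.G.Adj s c ∧ w' = C.φ c) := by
  obtain ⟨u, v, huv, i, hik, hw, hw'⟩ := C.normAdj ha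
  rcases ho with ⟨hj0, hws⟩ | ⟨hj0, hjk, c, hsc, hwc⟩
  · -- w = φ s
    have hi0 : i = 0 := by
      by_contra hne
      exact absurd ⟨s, (hws.symm.trans hw)⟩ (C.hsub.internal u v huv i (by omega) hik)
    have hsu : s = u := by
      apply C.hsub.phi_inj
      rw [← hws, hw, hi0, C.hsub.start u v huv]
    subst hsu
    rcases eq_or_lt_of_le (show 1 ≤ C.k from C.hk) with hk1 | hk2
    · refine Or.inr ⟨by omega, v, huv, ?_⟩
      rw [hw', hi0, show (0 + 1 : ℕ) = C.k by omega]
      exact C.hsub.finish s v huv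
    · refine Or.inl ⟨1, Or.inr ⟨one_pos, by omega, v, huv, by rw [hw', hi0]⟩, by omega, by omega⟩
  · -- w = p s c j interior
    have hieq := hw.symm.trans hwc
    have hi0 : 0 < i := by
      by_contra hne
      have : i = 0 := by omega
      rw [this, C.hsub.start u v huv] at hieq
      exact absurd ⟨u, hieq⟩ (C.hsub.internal s c hsc j hj0 hjk)
    rcases C.interiorEq hsc huv hj0 hjk hi0 hik hieq.symm with ⟨rfl, rfl, rfl⟩ | ⟨h1, h2, h3⟩
    · -- aligned: w' = p s c (i+1), and j = i
      by_cases hjk1 : j + 1 = C.k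
      · refine Or.inr ⟨by omega, c, hsc, ?_⟩
        rw [hw', hjk1, C.hsub.finish s c hsc]
      · exact Or.inl ⟨j + 1, Or.inr ⟨by omega, by omega, c, hsc, hw'⟩, by omega, by omega⟩
    · -- flipped: u = c, v = s (note h1 : s = v, h2 : c = u, h3 : j = k - i)
      subst h1; subst h2
      have hw'2 : w' = C.p s c (j - 1) := by
        rw [hw', C.hsub.rev c s hsc.symm (i+1) (by omega)]
        congr 1; omega
      by_cases hj1 : j = 1
      · refine Or.inl ⟨0, Or.inl ⟨rfl, ?_⟩, by omega, by omega⟩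
        rw [hw'2, hj1]
        exact C.hsub.start s c hsc
      · exact Or.inl ⟨j - 1, Or.inr ⟨by omega, by omega, c, hsc, hw'2⟩, by omega, by omega⟩

theorem walk_cons_decomp {X : Type} {Gr : SimpleGraph X} {u v : X} (Q : Gr.Walk u v)
    (h : Q.length ≠ 0) :
    ∃ (w1 : X) (_ : Gr.Adj u w1) (Q' : Gr.Walk w1 v), Q.length = Q'.length + 1 := by
  cases Q with
  | nil => simp at h
  | cons ha Q' => exact ⟨_, ha, Q', by simp⟩

/-- Projection of walks: B4 lemma. -/
theorem b4 {w w' : W} (Q : C.H.Walk w w') : ∀ b : V, w' = C.φ b → ∀ s j, C.Off s j w →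
    ∃ (a : V) (P : C.G.Walk a b),
      (a = s ∧ C.k * P.length + j ≤ Q.length) ∨
      (C.G.Adj s a ∧ C.k * P.length + (C.k - j) ≤ Q.length) := by
  induction Q with
  | nil =>
    intro b hb s j ho
    rw [hb] at ho
    obtain ⟨rfl, rfl⟩ := C.offNil ho
    exact ⟨s, SimpleGraph.Walk.nil, Or.inl ⟨rfl, by simp⟩⟩
  | @cons w w1 w2 ha Q ih =>
    intro b hb s j ho
    rcases C.core ho ha with ⟨j', ho', hb1, hb2⟩ | ⟨hj, c, hsc, hwc⟩
    · obtain ⟨a, P, hc⟩ := ih b hb s j' ho'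
      rcases hc with ⟨h1, h2⟩ | ⟨h1, h2⟩
      · exact ⟨a, P, Or.inl ⟨h1, by rw [SimpleGraph.Walk.length_cons]; omega⟩⟩
      · exact ⟨a, P, Or.inr ⟨h1, by rw [SimpleGraph.Walk.length_cons]; omega⟩⟩
    · obtain ⟨a, P, hc⟩ := ih b hb c 0 (by rw [hwc]; exact Or.inl ⟨rfl, rfl⟩)
      have hk1 : C.k - j = 1 := by have := C.hk; omega
      rcases hc with ⟨rfl, h2⟩ | ⟨h1, h2⟩
      · exact ⟨a, P, Or.inr ⟨hsc, by rw [SimpleGraph.Walk.length_cons]; omega⟩⟩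
      · refine ⟨c, SimpleGraph.Walk.cons h1 P, Or.inr ⟨hsc, ?_⟩⟩
        rw [SimpleGraph.Walk.length_cons, SimpleGraph.Walk.length_cons]
        have hm : C.k * (P.length + 1) = C.k * P.length + C.k := by ring
        omega

theorem visitsEq {a b : V} (Q : C.H.Walk (C.φ a) (C.φ b)) (h : Q.length ≤ C.k - 1) :
    a = b := by
  obtain ⟨a', P, hc⟩ := C.b4 Q b rfl a 0 (Or.inl ⟨rfl, rfl⟩)
  have hk := C.hk
  rcases hc with ⟨rfl, h2⟩ | ⟨h1, h2⟩
  · rcases Nat.eq_zero_or_pos P.length with h0 | h0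
    · exact SimpleGraph.Walk.eq_of_length_eq_zero h0
    · have : C.k * 1 ≤ C.k * P.length := Nat.mul_le_mul_left _ h0
      omega
  · omega

theorem stepsToWalk {X : Type} {Gr : SimpleGraph X} {c : ℕ → X}
    (hc : ∀ τ, Step Gr (c τ) (c (τ + 1))) :
    ∀ t₂ t₁, t₁ ≤ t₂ → ∃ w : Gr.Walk (c t₁) (c t₂), w.length ≤ t₂ - t₁ := by
  intro t₂
  induction t₂ with
  | zero => intro t₁ h; rw [Nat.le_zero] at h; subst h; exact ⟨SimpleGraph.Walk.nil, by simp⟩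
  | succ t₂ ih =>
    intro t₁ h
    rcases eq_or_lt_of_le h with rfl | hlt
    · exact ⟨SimpleGraph.Walk.nil, by simp⟩
    · obtain ⟨w, hw⟩ := ih t₁ (by omega)
      rcases hc t₂ with he | ha
      · exact ⟨w.copy rfl he, by rw [SimpleGraph.Walk.length_copy]; omega⟩
      · exact ⟨w.concat ha, by rw [SimpleGraph.Walk.length_concat]; omega⟩

/-- The endgame projection lemma. -/
theorem endb {s j w b} {d : ℕ} (ho : C.Off s j w) (Q : C.H.Walk w (C.φ b))
    (hQ : Q.length ≤ d + C.k) :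
    ∃ a, Step C.G s a ∧ ∃ P : C.G.Walk a b, C.k * P.length ≤ d + C.k - 1 := by
  have hk := C.hk
  by_cases hj : j = 0
  · subst hj
    have hws : w = C.φ s := by
      rcases ho with ⟨_, h⟩ | ⟨h, _⟩
      · exact h
      · omega
    subst hws
    rcases Nat.eq_zero_or_pos Q.length with h0 | hpos
    · have hsb : s = b := C.hsub.phi_inj (SimpleGraph.Walk.eq_of_length_eq_zero h0)
      exact ⟨s, Or.inl rfl, SimpleGraph.Walk.nil.copy rfl hsb, by simp⟩
    · obtain ⟨w1, ha, Q', hlen⟩ := walk_cons_decomp Q (by omega)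
      rcases C.core (show C.Off s 0 (C.φ s) from Or.inl ⟨rfl, rfl⟩) ha with
        ⟨j', ho', hb1, hb2⟩ | ⟨hj1, c, hsc, hwc⟩
      · obtain ⟨a, P, hc⟩ := C.b4 Q' b rfl s j' ho'
        have hj'k : j' < C.k ∨ j' = 0 := C.off_lt ho'
        rcases hc with ⟨rfl, h2⟩ | ⟨h1, h2⟩
        · exact ⟨a, Or.inl rfl, P, by omega⟩
        · exact ⟨a, Or.inr h1, P, by omega⟩
      · obtain ⟨a, P, hc⟩ := C.b4 Q' b rfl c 0 (Or.inl ⟨rfl, hwc⟩)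
        rcases hc with ⟨rfl, h2⟩ | ⟨h1, h2⟩
        · exact ⟨a, Or.inr hsc, P, by omega⟩
        · refine ⟨c, Or.inr hsc, SimpleGraph.Walk.cons h1 P, ?_⟩
          rw [SimpleGraph.Walk.length_cons]
          have hm : C.k * (P.length + 1) = C.k * P.length + C.k := by ring
          omega
  · obtain ⟨a, P, hc⟩ := C.b4 Q b rfl s j ho
    have hjk : j < C.k := by rcases C.off_lt ho with h | h; omega; omega
    rcases hc with ⟨rfl, h2⟩ | ⟨h1, h2⟩
    · exact ⟨a, Or.inl rfl, P, by omega⟩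
    · exact ⟨a, Or.inr h1, P, by omega⟩

/-! ### Shadow machinery -/

theorem exists_off (w : W) : ∃ s j, C.Off s j w := by
  rcases C.hsub.cover w with ⟨v, rfl⟩ | ⟨u, v, huv, i, hik, rfl⟩
  · exact ⟨v, 0, Or.inl ⟨rfl, rfl⟩⟩
  · rcases Nat.eq_zero_or_pos i with rfl | h0
    · exact ⟨u, 0, Or.inl ⟨rfl, C.hsub.start u v huv⟩⟩
    · rcases eq_or_lt_of_le hik with rfl | hlt
      · exact ⟨v, 0, Or.inl ⟨rfl, C.hsub.finish u v huv⟩⟩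
      · exact ⟨u, i, Or.inr ⟨h0, hlt, v, huv, rfl⟩⟩

noncomputable def shadow0 (w : W) : V := (C.exists_off w).choose

theorem shadow0_spec (w : W) : ∃ j, C.Off (C.shadow0 w) j w :=
  (C.exists_off w).choose_spec

noncomputable def upd (s : V) (w : W) : V :=
  if h : ∃ v, w = C.φ v then h.choose else s

theorem upd_phi (s : V) (v : V) : C.upd s (C.φ v) = v := by
  have h : ∃ v', (C.φ v : W) = C.φ v' := ⟨v, rfl⟩
  rw [upd, dif_pos h]
  exact (C.hsub.phi_inj h.choose_spec).symm

theorem upd_ne {s : V} {w : W} (h : C.upd s w ≠ s) : w = C.φ (C.upd s w) := by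
  by_cases h' : ∃ v, w = C.φ v
  · obtain ⟨v, rfl⟩ := h'
    rw [C.upd_phi]
  · rw [upd, dif_neg h'] at h
    exact absurd rfl h

theorem upd_spec {s j : _} {w w' : W} (ho : C.Off s j w) (hs : Step C.H w w') :
    (∃ j', C.Off (C.upd s w') j' w') ∧ Step C.G s (C.upd s w') := by
  by_cases h' : ∃ v, w' = C.φ v
  · obtain ⟨v, rfl⟩ := h'
    rw [C.upd_phi]
    refine ⟨⟨0, Or.inl ⟨rfl, rfl⟩⟩, ?_⟩
    rcases hs with rfl | ha
    · exact Or.inl (C.offNil ho).1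
    · rcases C.core ho ha with ⟨j', ho', _, _⟩ | ⟨_, c, hsc, hwc⟩
      · exact Or.inl (C.offNil ho').1
      · rw [← C.hsub.phi_inj hwc] at hsc
        exact Or.inr hsc
  · have hu : C.upd s w' = s := by rw [upd, dif_neg h']
    rw [hu]
    refine ⟨?_, Or.inl rfl⟩
    rcases hs with rfl | ha
    · exact ⟨j, ho⟩
    · rcases C.core ho ha with ⟨j', ho', _, _⟩ | ⟨_, c, hsc, hwc⟩
      · exact ⟨j', ho'⟩
      · exact absurd ⟨c, hwc⟩ h'

noncomputable def shSeq (c : ℕ → W) : ℕ → V := fun t =>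
  Nat.rec (C.shadow0 (c 0)) (fun t s => C.upd s (c (t + 1))) t

theorem shSeq_zero (c : ℕ → W) : C.shSeq c 0 = C.shadow0 (c 0) := rfl

theorem shSeq_succ (c : ℕ → W) (t : ℕ) :
    C.shSeq c (t + 1) = C.upd (C.shSeq c t) (c (t + 1)) := rfl

theorem shSeq_congr {c c' : ℕ → W} : ∀ {t}, (∀ τ, τ ≤ t → c τ = c' τ) →
    C.shSeq c t = C.shSeq c' t := by
  intro t
  induction t with
  | zero => intro h; rw [shSeq_zero, shSeq_zero, h 0 le_rfl]
  | succ t ih =>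
    intro h
    rw [shSeq_succ, shSeq_succ, ih (fun τ hτ => h τ (by omega)), h (t+1) le_rfl]

theorem shInv {c : ℕ → W} (hc : ∀ τ, Step C.H (c τ) (c (τ + 1))) :
    ∀ t, ∃ j, C.Off (C.shSeq c t) j (c t) := by
  intro t
  induction t with
  | zero => exact C.shadow0_spec (c 0)
  | succ t ih =>
    obtain ⟨j, ho⟩ := ih
    rw [shSeq_succ]
    exact (C.upd_spec ho (hc t)).1

theorem window {c : ℕ → W} (hc : ∀ τ, Step C.H (c τ) (c (τ + 1)))
    {t δ : ℕ} (hδ : δ ≤ C.k) : Step C.G (C.shSeq c t) (C.shSeq c (t + δ)) := by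
  suffices h : ∀ δ', δ' ≤ δ → Step C.G (C.shSeq c t) (C.shSeq c (t + δ')) ∧
      (C.shSeq c (t + δ') ≠ C.shSeq c t →
        ∃ τ', t < τ' ∧ τ' ≤ t + δ' ∧ c τ' = C.φ (C.shSeq c (t + δ'))) by
    exact (h δ le_rfl).1
  intro δ'
  induction δ' with
  | zero => intro _; exact ⟨Or.inl rfl, fun h => absurd rfl h⟩
  | succ δ' ih =>
    intro hle
    obtain ⟨ihs, ihw⟩ := ih (by omega)
    have hsucc : t + (δ' + 1) = (t + δ') + 1 := by omega
    have hunf : C.shSeq c (t + (δ' + 1)) = C.upd (C.shSeq c (t + δ')) (c ((t + δ') + 1)) := by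
      rw [hsucc, shSeq_succ]
    by_cases he : C.shSeq c (t + (δ' + 1)) = C.shSeq c (t + δ')
    · rw [he]
      refine ⟨ihs, fun hne => ?_⟩
      obtain ⟨τ', h1, h2, h3⟩ := ihw hne
      exact ⟨τ', h1, by omega, h3⟩
    · have hbr : c (t + (δ' + 1)) = C.φ (C.shSeq c (t + (δ' + 1))) := by
        rw [hunf] at he ⊢
        rw [hsucc]
        exact C.upd_ne he
      obtain ⟨j, ho⟩ := C.shInv hc (t + δ')
      have hstep : Step C.G (C.shSeq c (t + δ')) (C.shSeq c (t + (δ' + 1))) := by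
        rw [hunf]
        exact (C.upd_spec ho (hc (t + δ'))).2
      by_cases hs1 : C.shSeq c (t + δ') = C.shSeq c t
      · rw [hs1] at hstep
        refine ⟨hstep, fun _ => ⟨t + (δ' + 1), by omega, le_rfl, hbr⟩⟩
      · -- two changes within the window: contradiction
        obtain ⟨τ₁, hτ1, hτ2, hτ3⟩ := ihw hs1
        exfalso
        obtain ⟨wlk, hwlk⟩ := stepsToWalk hc (t + (δ' + 1)) τ₁ (by omega)
        have heq : C.shSeq c (t + δ') = C.shSeq c (t + (δ' + 1)) := by
          apply C.visitsEq (wlk.copy hτ3 hbr)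
          rw [SimpleGraph.Walk.length_copy]
          have := C.hk
          omega
        exact he heq.symm

/-! ### Lifting histories -/

noncomputable def blkF (u x : V) (j : ℕ) : W := if C.G.Adj u x then C.p u x j else C.φ x

noncomputable def rLift (r : ℕ → V) : ℕ → W := fun t =>
  match t with
  | 0 => C.φ (r 0)
  | (t+1) => C.blkF (r (t / C.k)) (r (t / C.k + 1)) (t % C.k + 1)

def ell (n : ℕ) : ℕ :=
  match n with
  | 0 => 0
  | (m+1) => m * C.k + 1

theorem ell_succ (n : ℕ) : C.ell (n + 1) = n * C.k + 1 := rfl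

noncomputable def liftL : List V → List W
  | [] => []
  | (a :: t) => List.ofFn (fun τ : Fin (t.length * C.k + 1) =>
      C.rLift (fun n => (a :: t).getD n a) τ.val)

theorem liftL_length (h : List V) : (C.liftL h).length = C.ell h.length := by
  cases h with
  | nil => rfl
  | cons a t => simp [liftL, ell]

theorem rLift_congr {r r' : ℕ → V} {N τ : ℕ} (h : ∀ i, i ≤ N → r i = r' i)
    (hτ : τ ≤ N * C.k) : C.rLift r τ = C.rLift r' τ := by
  cases τ with
  | zero => show C.φ (r 0) = C.φ (r' 0); rw [h 0 (by omega)]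
  | succ t =>
    have hk0 : 0 < C.k := C.hk
    have h1 : t / C.k < N := (Nat.div_lt_iff_lt_mul hk0).2 (by omega)
    show C.blkF (r (t / C.k)) (r (t / C.k + 1)) (t % C.k + 1)
      = C.blkF (r' (t / C.k)) (r' (t / C.k + 1)) (t % C.k + 1)
    rw [h _ (by omega), h _ (by omega)]

theorem liftL_cons_get (a : V) (t : List V) (i : ℕ) (hL : i < (C.liftL (a :: t)).length) :
    (C.liftL (a :: t))[i]'hL = C.rLift (fun n => (a :: t).getD n a) i := by
  simp only [liftL, List.getElem_ofFn]

theorem take_liftL (h : List V) (x : V) (τ : ℕ) (hτ : τ ≤ C.ell h.length) :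
    (C.liftL (h ++ [x])).take τ = (C.liftL h).take τ := by
  cases h with
  | nil =>
    have : τ = 0 := by simpa [ell] using hτ
    simp [this]
  | cons a t =>
    simp only [ell, List.length_cons] at hτ
    have hkk : t.length * C.k ≤ (t.length + 1) * C.k := by
      have : (t.length + 1) * C.k = t.length * C.k + C.k := by ring
      omega
    apply List.ext_getElem
    · simp [liftL_length, ell]; omega
    · intro i h1 h2
      have hch : ((a :: t) ++ [x]) = (a :: (t ++ [x])) := rfl
      simp only [List.getElem_take, hch]
      rw [C.liftL_cons_get a (t ++ [x]) i, C.liftL_cons_get a t i]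
      have hi2 : i < t.length * C.k + 1 := by
        have := h2
        simp [liftL_length, ell] at this
        omega
      apply C.rLift_congr (N := t.length) _ (by omega)
      intro n hn
      have hn1 : n < (a :: t).length := by simp; omega
      have hn2 : n < (a :: (t ++ [x])).length := by simp; omega
      rw [List.getD_eq_getElem _ _ hn2, List.getD_eq_getElem _ _ hn1]
      exact List.getElem_append_left hn1

theorem take_liftL_ofFn (r : ℕ → V) (n T : ℕ) (hT : T ≤ C.ell n) :
    (C.liftL (List.ofFn (fun m : Fin n => r m.val))).take T =
      List.ofFn (fun τ : Fin T => C.rLift r τ.val) := by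
  cases n with
  | zero =>
    have : T = 0 := by simpa [ell] using hT
    simp [this, liftL]
  | succ m =>
    simp only [ell] at hT
    rw [List.ofFn_succ]
    apply List.ext_getElem
    · simp [liftL_length, ell]; omega
    · intro i h1 h2
      have hiT : i < T := by simp at h1; omega
      simp only [List.getElem_take, List.getElem_ofFn]
      rw [C.liftL_cons_get _ _ i]
      apply C.rLift_congr (N := m) _ (by omega)
      intro n' hn'
      cases n' with
      | zero => rfl
      | succ n'' =>
        have hn2 : n'' + 1 < ((fun (i : Fin (m+1)) => r i.val) 0 ::
            List.ofFn fun (i : Fin m) => r (i.succ).val).length := by simp; omega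
        rw [List.getD_eq_getElem _ _ hn2]
        simp [List.getElem_ofFn]

/-! ### Legality of the lifted robber trajectory -/

theorem blk_k {u x : V} : C.blkF u x C.k = C.φ x := by
  rw [blkF]
  split
  · exact C.hsub.finish u x ‹_›
  · rfl

theorem blk_step {u x : V} {j : ℕ} (hstep : Step C.G u x) (hj : j < C.k) :
    Step C.H (C.blkF u x j) (C.blkF u x (j+1)) := by
  rcases hstep with rfl | ha
  · simp only [blkF, if_neg (C.G.irrefl)]
    exact Or.inl rfl
  · simp only [blkF, if_pos ha]
    exact Or.inr (C.pAdj ha hj)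

theorem phi_step {u x : V} (hstep : Step C.G u x) : Step C.H (C.φ u) (C.blkF u x 1) := by
  rcases hstep with rfl | ha
  · rw [blkF, if_neg (C.G.irrefl)]
    exact Or.inl rfl
  · rw [blkF, if_pos ha]
    have h0 : C.φ u = C.p u x 0 := (C.hsub.start u x ha).symm
    rw [h0]
    exact Or.inr (C.pAdj ha (by have := C.hk; omega))

theorem rLift_legal {r : ℕ → V} (hr : ∀ n, Step C.G (r n) (r (n+1))) :
    ∀ τ, Step C.H (C.rLift r τ) (C.rLift r (τ+1)) := by
  have hk0 : 0 < C.k := C.hk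
  intro τ
  cases τ with
  | zero =>
    show Step C.H (C.φ (r 0)) (C.blkF (r (0 / C.k)) (r (0 / C.k + 1)) (0 % C.k + 1))
    rw [Nat.zero_div, Nat.zero_mod]
    exact C.phi_step (hr 0)
  | succ t =>
    show Step C.H (C.blkF (r (t / C.k)) (r (t / C.k + 1)) (t % C.k + 1))
      (C.blkF (r ((t+1) / C.k)) (r ((t+1) / C.k + 1)) ((t+1) % C.k + 1))
    have hdm := Nat.div_add_mod t C.k
    by_cases hend : t % C.k + 1 = C.k
    · have ht1 : t + 1 = (t / C.k + 1) * C.k := by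
        have e1 : (t / C.k + 1) * C.k = C.k * (t / C.k) + C.k := by ring
        omega
      have hdiv : (t + 1) / C.k = t / C.k + 1 := by
        rw [ht1]; exact Nat.mul_div_cancel _ hk0
      have hmod : (t + 1) % C.k = 0 := by
        rw [ht1]; exact Nat.mul_mod_left _ _
      rw [hend, hdiv, hmod, C.blk_k]
      exact C.phi_step (hr (t / C.k + 1))
    · have hmlt : t % C.k < C.k := Nat.mod_lt _ hk0
      have hsplit : t + 1 = (t % C.k + 1) + (t / C.k) * C.k := by
        have e1 : (t / C.k) * C.k = C.k * (t / C.k) := by ring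
        omega
      have hdiv : (t + 1) / C.k = t / C.k := by
        rw [hsplit, Nat.add_mul_div_right _ _ hk0, Nat.div_eq_of_lt (by omega), Nat.zero_add]
      have hmod : (t + 1) % C.k = t % C.k + 1 := by
        rw [hsplit, Nat.add_mul_mod_self_right, Nat.mod_eq_of_lt (by omega)]
      rw [hdiv, hmod]
      exact C.blk_step (hr (t / C.k)) (by omega)

theorem rLift_at (r : ℕ → V) {T m s : ℕ} (hT : T = m * C.k + s) (h1 : 1 ≤ s)
    (h2 : s ≤ C.k) : C.rLift r T = C.blkF (r m) (r (m+1)) s := by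
  have hk0 : 0 < C.k := C.hk
  have ht : T = (m * C.k + (s - 1)) + 1 := by omega
  rw [ht]
  show C.blkF (r ((m * C.k + (s-1)) / C.k)) (r ((m * C.k + (s-1)) / C.k + 1))
      ((m * C.k + (s-1)) % C.k + 1) = C.blkF (r m) (r (m+1)) s
  have hdiv : (m * C.k + (s-1)) / C.k = m := by
    rw [Nat.add_comm, Nat.add_mul_div_right _ _ hk0, Nat.div_eq_of_lt (by omega), Nat.zero_add]
  have hmod : (m * C.k + (s-1)) % C.k = s - 1 := by
    rw [Nat.add_comm, Nat.add_mul_mod_self_right, Nat.mod_eq_of_lt (by omega)]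
  rw [hdiv, hmod, show s - 1 + 1 = s by omega]

theorem rLift_block (r : ℕ → V) (m : ℕ) : C.rLift r ((m+1) * C.k) = C.φ (r (m+1)) := by
  rw [C.rLift_at r (show (m+1) * C.k = m * C.k + C.k by ring) C.hk le_rfl, C.blk_k]

/-! ### The simulated cop strategy -/

variable {q : ℕ}

noncomputable def ctr (FH : List W → Fin q → W) (h : List V) (i : Fin q) (τ : ℕ) : W :=
  FH ((C.liftL h).take τ) i

theorem ctr_steps {FH : List W → Fin q → W}
    (hFH : ∀ hist x i, Step C.H (FH hist i) (FH (hist ++ [x]) i))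
    (h : List V) (i : Fin q) : ∀ τ, Step C.H (C.ctr FH h i τ) (C.ctr FH h i (τ + 1)) := by
  intro τ
  by_cases hτ : τ < (C.liftL h).length
  · have he : (C.liftL h).take (τ+1) = (C.liftL h).take τ ++ [(C.liftL h)[τ]] := by
      rw [List.take_succ]
      simp [List.getElem?_eq_getElem hτ]
    simp only [ctr]
    rw [he]
    exact hFH _ _ i
  · have e1 : (C.liftL h).take τ = C.liftL h := List.take_of_length_le (by omega)
    have e2 : (C.liftL h).take (τ+1) = C.liftL h := List.take_of_length_le (by omega)
    simp only [ctr]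
    rw [e1, e2]
    exact Or.inl rfl

noncomputable def SHv (FH : List W → Fin q → W) (h : List V) (i : Fin q) (t : ℕ) : V :=
  C.shSeq (C.ctr FH h i) t

theorem SHv_consistent (FH : List W → Fin q → W) (h : List V) (x : V) (i : Fin q)
    (t : ℕ) (ht : t ≤ C.ell h.length) :
    C.SHv FH (h ++ [x]) i t = C.SHv FH h i t := by
  apply C.shSeq_congr
  intro τ hτ
  simp only [ctr]
  rw [C.take_liftL h x τ (by omega)]

def Det (FH : List W → Fin q → W) (d : ℕ) (h : List V) (i : Fin q) : Prop :=
  ∃ a v, h.getLast? = some v ∧ Step C.G (C.SHv FH h i (C.ell (h.length - 1))) a ∧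
    ∃ P : C.G.Walk a v, P.length ≤ (d + C.k - 1) / C.k

noncomputable def pick (FH : List W → Fin q → W) (d : ℕ) (h : List V) (i : Fin q) :
    Option V :=
  if hd : C.Det FH d h i then some hd.choose else none

theorem pick_spec {FH : List W → Fin q → W} {d : ℕ} {h : List V} {i : Fin q} {a : V}
    (hp : C.pick FH d h i = some a) :
    ∃ v, h.getLast? = some v ∧ Step C.G (C.SHv FH h i (C.ell (h.length - 1))) a ∧
      ∃ P : C.G.Walk a v, P.length ≤ (d + C.k - 1) / C.k := by
  rw [pick] at hp
  split at hp
  · rename_i hd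
    have ha : hd.choose = a := by injection hp
    rw [← ha]
    exact hd.choose_spec
  · exact absurd hp (by simp)

theorem pick_isSome {FH : List W → Fin q → W} {d : ℕ} (h : List V) (i : Fin q)
    (hd : C.Det FH d h i) : (C.pick FH d h i).isSome := by
  rw [pick, dif_pos hd]
  rfl

noncomputable def FG (FH : List W → Fin q → W) (d : ℕ) (h : List V) (i : Fin q) : V :=
  if hd : ∃ n, n ≤ h.length ∧ (C.pick FH d (h.take n) i).isSome then
    (C.pick FH d (h.take (Nat.find hd)) i).getD (C.SHv FH h i (C.ell h.length))
  else C.SHv FH h i (C.ell h.length)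

theorem FG_step {FH : List W → Fin q → W} {d : ℕ}
    (hFH : ∀ hist x i, Step C.H (FH hist i) (FH (hist ++ [x]) i))
    (h : List V) (x : V) (i : Fin q) :
    Step C.G (C.FG FH d h i) (C.FG FH d (h ++ [x]) i) := by
  have hK1 : ∀ m, m ≤ h.length → (h ++ [x]).take m = h.take m := fun m hm =>
    List.take_append_of_le_length hm
  by_cases h1 : ∃ n, n ≤ h.length ∧ (C.pick FH d (h.take n) i).isSome
  · have h2 : ∃ n, n ≤ (h ++ [x]).length ∧ (C.pick FH d ((h ++ [x]).take n) i).isSome := by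
      obtain ⟨m, hm, hs⟩ := h1
      exact ⟨m, by simp; omega, by rw [hK1 m hm]; exact hs⟩
    have hle1 : Nat.find h1 ≤ h.length := (Nat.find_spec h1).1
    have hfind : Nat.find h2 = Nat.find h1 := by
      have hle2 : Nat.find h2 ≤ Nat.find h1 := by
        apply Nat.find_min' h2
        exact ⟨hle1.trans (by simp), by rw [hK1 _ hle1]; exact (Nat.find_spec h1).2⟩
      apply le_antisymm hle2
      apply Nat.find_min' h1
      refine ⟨hle2.trans hle1, ?_⟩
      have hs2 := (Nat.find_spec h2).2
      rwa [hK1 _ (hle2.trans hle1)] at hs2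
    rw [FG, FG, dif_pos h1, dif_pos h2, hfind, hK1 _ hle1]
    obtain ⟨aa, haa⟩ := Option.isSome_iff_exists.1 (Nat.find_spec h1).2
    rw [haa]
    exact Or.inl rfl
  · by_cases h2 : ∃ n, n ≤ (h ++ [x]).length ∧ (C.pick FH d ((h ++ [x]).take n) i).isSome
    · have hful : Nat.find h2 = h.length + 1 := by
        rcases Nat.lt_or_ge (Nat.find h2) (h.length + 1) with hlt | hge
        · exfalso
          apply h1
          exact ⟨Nat.find h2, Nat.lt_succ_iff.mp hlt,
            by rw [← hK1 _ (Nat.lt_succ_iff.mp hlt)]; exact (Nat.find_spec h2).2⟩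
        · exact le_antisymm ((Nat.find_spec h2).1.trans (by simp)) hge
      rw [FG, FG, dif_neg h1, dif_pos h2, hful]
      have htk : (h ++ [x]).take (h.length + 1) = h ++ [x] := by
        apply List.take_of_length_le
        simp
      rw [htk]
      have hsome : (C.pick FH d (h ++ [x]) i).isSome := by
        have hs2 := (Nat.find_spec h2).2
        rwa [hful, htk] at hs2
      obtain ⟨aa, haa⟩ := Option.isSome_iff_exists.1 hsome
      rw [haa]
      obtain ⟨v, hv, hstep, _⟩ := C.pick_spec haa
      have hlen : (h ++ [x]).length - 1 = h.length := by simp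
      rw [hlen] at hstep
      rw [C.SHv_consistent FH h x i (C.ell h.length) le_rfl] at hstep
      exact hstep
    · rw [FG, FG, dif_neg h1, dif_neg h2]
      have hcons : C.SHv FH (h ++ [x]) i (C.ell h.length) = C.SHv FH h i (C.ell h.length) :=
        C.SHv_consistent FH h x i _ le_rfl
      rw [← hcons]
      obtain ⟨δ, hδ1, hδ2⟩ : ∃ δ, δ ≤ C.k ∧ C.ell ((h ++ [x]).length) = C.ell h.length + δ := by
        cases hl : h.length with
        | zero =>
          refine ⟨1, C.hk, ?_⟩
          simp [hl, ell]
        | succ m =>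
          refine ⟨C.k, le_rfl, ?_⟩
          have hme : (m + 1) * C.k = m * C.k + C.k := by ring
          simp [hl, ell]
          omega
      rw [hδ2]
      exact C.window (C.ctr_steps hFH (h ++ [x]) i) hδ1

/-! ### The endgame -/

theorem ofFn_getLast? {α : Type} {n : ℕ} (hn : 1 ≤ n) (f : Fin n → α) :
    (List.ofFn f).getLast? = some (f ⟨n - 1, by omega⟩) := by
  rw [List.getLast?_eq_getElem?]
  simp only [List.length_ofFn]
  rw [List.getElem?_eq_getElem (by simp; omega)]
  simp [List.getElem_ofFn]

theorem det_of_pick {FH : List W → Fin q → W} {d : ℕ} {h : List V} {i : Fin q}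
    (hp : (C.pick FH d h i).isSome) : C.Det FH d h i := by
  by_contra hD
  rw [pick, dif_neg hD] at hp
  simp at hp

theorem detect_core {FH : List W → Fin q → W} {d : ℕ}
    (hFH : ∀ hist x i, Step C.H (FH hist i) (FH (hist ++ [x]) i))
    {r : ℕ → V} (hr : ∀ n, Step C.G (r n) (r (n + 1))) (i : Fin q)
    (T ε N Te : ℕ)
    (hN : 1 ≤ N)
    (hl : C.ell (N - 1) ≤ T + ε)
    (hTE : T ≤ Te)
    (hup : T + ε ≤ C.ell N)
    (htot : (T + ε - C.ell (N - 1)) + d + (Te - T) ≤ d + C.k)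
    (hTe : C.rLift r Te = C.φ (r (N - 1)))
    (hQ0 : WithinDist C.H d (FH (List.ofFn fun τ : Fin (T + ε) => C.rLift r τ.val) i)
      (C.rLift r T)) :
    C.Det FH d (List.ofFn fun m : Fin N => r m.val) i := by
  set h : List V := List.ofFn fun m : Fin N => r m.val with hh
  have hhl : h.length = N := by simp [hh]
  set c : ℕ → W := C.ctr FH h i with hcdef
  have hc : ∀ τ, Step C.H (c τ) (c (τ + 1)) := C.ctr_steps hFH h i
  have hidT : (C.liftL h).take (T + ε) =
      List.ofFn (fun τ : Fin (T + ε) => C.rLift r τ.val) := by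
    rw [hh]
    exact C.take_liftL_ofFn r N (T + ε) (by omega)
  have hcT : c (T + ε) = FH (List.ofFn fun τ : Fin (T + ε) => C.rLift r τ.val) i := by
    rw [hcdef]
    simp only [ctr]
    rw [hidT]
  obtain ⟨Q0, hQ0len⟩ := hQ0
  obtain ⟨W1, hW1⟩ := stepsToWalk hc (T + ε) (C.ell (N - 1)) hl
  obtain ⟨W3, hW3⟩ := stepsToWalk (C.rLift_legal hr) Te T hTE
  let QQ : C.H.Walk (c (C.ell (N - 1))) (C.φ (r (N - 1))) :=
    W1.append ((Q0.copy hcT.symm rfl).append (W3.copy rfl hTe))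
  have hQlen : QQ.length ≤ d + C.k := by
    simp only [QQ, SimpleGraph.Walk.length_append, SimpleGraph.Walk.length_copy]
    omega
  obtain ⟨j, hoff⟩ := C.shInv hc (C.ell (N - 1))
  obtain ⟨a, hstep, P, hP⟩ := C.endb hoff QQ hQlen
  refine ⟨a, r (N - 1), ?_, ?_, P, ?_⟩
  · rw [hh, ofFn_getLast? hN]
  · have he : h.length - 1 = N - 1 := by rw [hhl]
    rw [he]
    exact hstep
  · rw [Nat.le_div_iff_mul_le C.hk, Nat.mul_comm]
    exact hP

theorem detect_endgame {FH : List W → Fin q → W} {d : ℕ}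
    (hFH : ∀ hist x i, Step C.H (FH hist i) (FH (hist ++ [x]) i))
    {r : ℕ → V} (hr : ∀ n, Step C.G (r n) (r (n + 1))) (i : Fin q)
    (T ε : ℕ) (hε : ε ≤ 1)
    (hQ0 : WithinDist C.H d (FH (List.ofFn fun τ : Fin (T + ε) => C.rLift r τ.val) i)
      (C.rLift r T)) :
    ∃ N, C.Det FH d (List.ofFn fun m : Fin N => r m.val) i := by
  have hk0 : 0 < C.k := C.hk
  rcases Nat.eq_zero_or_pos T with rfl | hT
  · refine ⟨1, C.detect_core hFH hr i 0 ε 1 0 le_rfl (by simp [ell]) le_rfl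
      (by simp [ell]; omega) (by simp [ell]; omega) rfl hQ0⟩
  · obtain ⟨m, s2, hms, hs1, hsk⟩ : ∃ m s2, T = m * C.k + s2 ∧ 1 ≤ s2 ∧ s2 ≤ C.k := by
      have hdm := Nat.div_add_mod (T - 1) C.k
      have hmod : (T - 1) % C.k < C.k := Nat.mod_lt _ hk0
      have hmk : C.k * ((T - 1) / C.k) = ((T - 1) / C.k) * C.k := by ring
      exact ⟨(T - 1) / C.k, T - ((T - 1) / C.k) * C.k, by omega, by omega, by omega⟩
    have hmk2 : (m + 1) * C.k = m * C.k + C.k := by ring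
    have hmk3 : C.ell (m + 2) = (m + 1) * C.k + 1 := by simp [ell]
    have hmk4 : C.ell (m + 2 - 1) = m * C.k + 1 := by simp [ell]
    refine ⟨m + 2, C.detect_core hFH hr i T ε (m + 2) ((m + 1) * C.k) (by omega)
      (by rw [hmk4]; omega) (by omega) (by rw [hmk3]; omega) (by rw [hmk4]; omega) ?_ hQ0⟩
    have hbl := C.rLift_block r m
    simpa using hbl

/-! ### The main transfer -/

theorem copsWin_of (d : ℕ) (hH : CopsWin C.H d q) :
    CopsWin C.G ((d + C.k - 1) / C.k) q := by
  obtain ⟨FH, hFH, hcap⟩ := hH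
  refine ⟨C.FG FH d, fun h x i => C.FG_step hFH h x i, ?_⟩
  intro r hr
  obtain ⟨T, i, hct⟩ := hcap (C.rLift r) (C.rLift_legal hr)
  have hexist : ∃ N, C.Det FH d (List.ofFn fun m : Fin N => r m.val) i := by
    rcases hct with h0 | h1
    · exact C.detect_endgame hFH hr i T 0 (by omega) h0
    · exact C.detect_endgame hFH hr i T 1 (by omega) h1
  have hspec := Nat.find_spec hexist
  have hN1 : 1 ≤ Nat.find hexist := by
    rcases Nat.eq_zero_or_pos (Nat.find hexist) with he | hp
    · exfalso
      rw [he] at hspec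
      obtain ⟨a, v, hv, _⟩ := hspec
      simp at hv
    · exact hp
  set N₀ := Nat.find hexist with hN₀
  refine ⟨N₀ - 1, i, Or.inr ?_⟩
  have hN0 : N₀ - 1 + 1 = N₀ := by omega
  set h : List V := List.ofFn fun m : Fin N₀ => r m.val with hh
  have hhl : h.length = N₀ := by simp [hh]
  have hlist : (List.ofFn fun m2 : Fin (N₀ - 1 + 1) => r m2.val) = h := by
    apply List.ext_getElem
    · simp [hh]; omega
    · intro i2 ha hb
      simp only [hh, List.getElem_ofFn]
  rw [hlist]
  have htake : ∀ n', n' ≤ N₀ → h.take n' = List.ofFn fun m : Fin n' => r m.val := by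
    intro n' hn'
    apply List.ext_getElem
    · simp [hh]; omega
    · intro i2 ha hb
      simp [hh, List.getElem_take, List.getElem_ofFn]
  have hcond : ∃ n, n ≤ h.length ∧ (C.pick FH d (h.take n) i).isSome := by
    refine ⟨N₀, le_of_eq hhl.symm, ?_⟩
    rw [htake N₀ le_rfl, ← hh]
    exact C.pick_isSome h i hspec
  have hfind : Nat.find hcond = N₀ := by
    apply le_antisymm
    · exact Nat.find_min' hcond
        ⟨le_of_eq hhl.symm, by rw [htake N₀ le_rfl, ← hh]; exact C.pick_isSome h i hspec⟩
    · by_contra hcc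
      push_neg at hcc
      have hp := (Nat.find_spec hcond).2
      rw [htake _ (by omega)] at hp
      have hdet := C.det_of_pick hp
      have := Nat.find_min' hexist hdet
      omega
  rw [FG, dif_pos hcond, hfind, htake N₀ le_rfl, ← hh]
  have hsome : (C.pick FH d h i).isSome := C.pick_isSome h i hspec
  obtain ⟨aa, haa⟩ := Option.isSome_iff_exists.1 hsome
  rw [haa]
  obtain ⟨v, hv, _, P, hP⟩ := C.pick_spec haa
  have hvv : v = r (N₀ - 1) := by
    rw [hh, ofFn_getLast? hN1] at hv
    injection hv with hv'
    rw [← hv']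
  exact ⟨P.copy rfl hvv, by rw [SimpleGraph.Walk.length_copy]; exact hP⟩

end SubCtx

theorem allCops {W : Type} [Fintype W] (H : SimpleGraph W) (d : ℕ) :
    CopsWin H d (Fintype.card W) := by
  refine ⟨fun _ i => (Fintype.equivFin W).symm i, fun _ _ _ => Or.inl rfl, ?_⟩
  intro r _
  refine ⟨0, Fintype.equivFin W (r 0), Or.inl ?_⟩
  show WithinDist H d ((Fintype.equivFin W).symm (Fintype.equivFin W (r 0))) (r 0)
  rw [Equiv.symm_apply_apply]
  exact ⟨SimpleGraph.Walk.nil, by simp⟩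

end SubdivisionProof

end CopsRobbers

open CopsRobbers in
/-- For every finite simple graph `G` and all `d ≥ 0`, `k ≥ 1`,
`c_{⌈d/k⌉}(G) ≤ c_d(G^{(k)})`. -/
theorem statement3 {V W : Type} [Fintype V] [Fintype W] (G : SimpleGraph V)
    (H : SimpleGraph W) (k : ℕ) (hk : 1 ≤ k) (φ : V → W) (p : V → V → ℕ → W)
    (hsub : IsKSubdivision G k H φ p) (d : ℕ) :
    copNumber G ((d + k - 1) / k) ≤ copNumber H d := by
  have hne : {q' | CopsWin H d q'}.Nonempty := ⟨Fintype.card W, allCops H d⟩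
  have hmem : CopsWin H d (copNumber H d) := Nat.sInf_mem hne
  have hG : CopsWin G ((d + k - 1) / k) (copNumber H d) :=
    SubCtx.copsWin_of ⟨G, H, k, φ, p, hk, hsub⟩ d hmem
  exact Nat.sInf_le hG
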